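/- Let T > 0, C > 0, y₀ ∈ [0,1], and let y : [0,T] → [0,1] be continuous with y(t) ≤ y₀ + C ∫₀ᵗ λ(y(τ)) dτ for all t ∈ [0,T]. Then y(t) ≤ y₀^{exp(−C t)} · e^{1 − exp(−C t)} for all t ∈ [0,T] (with the convention 0^s = 0 for s > 0). -/

import Mathlib

/-- The quasi-Lipschitz modulus: `λ(d) = d (1 - log d)` for `0 ≤ d < 1`
and `λ(d) = 1` for `d ≥ 1`. -/
noncomputable def qlLambda (d : ℝ) : ℝ := if 1 ≤ d then 1 else d * (1 - Real.log d)

lemma qlLambda_of_le_one {d : ℝ} (hd : d ≤ 1) : qlLambda d = d * (1 - Real.log d) := by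
  unfold qlLambda
  split_ifs with h
  · have : d = 1 := le_antisymm hd h
    simp [this]
  · rfl

lemma ql_mono : MonotoneOn (fun d : ℝ => d * (1 - Real.log d)) (Set.Icc 0 1) := by
  have heq : (fun d : ℝ => d * (1 - Real.log d)) = fun d : ℝ => d - d * Real.log d := by
    funext d; ring
  rw [heq]
  have hder : ∀ x ∈ Set.Ioo (0:ℝ) 1,
      HasDerivAt (fun d : ℝ => d - d * Real.log d) (-Real.log x) x := by
    intro x hx
    have h1 : HasDerivAt (fun d : ℝ => d - d * Real.log d) (1 - (Real.log x + 1)) x :=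
      (hasDerivAt_id x).sub (Real.hasDerivAt_mul_log (ne_of_gt hx.1))
    convert h1 using 1; ring
  apply monotoneOn_of_deriv_nonneg (convex_Icc 0 1)
  · exact (continuous_id.sub Real.continuous_mul_log).continuousOn
  · intro x hx
    rw [interior_Icc] at hx
    exact (hder x hx).differentiableAt.differentiableWithinAt
  · intro x hx
    rw [interior_Icc] at hx
    rw [(hder x hx).deriv]
    simp [Real.log_nonpos (le_of_lt hx.1) (le_of_lt hx.2)]

lemma qlLambda_mono {x z : ℝ} (hx0 : 0 ≤ x) (hxz : x ≤ z) (hz1 : z ≤ 1) :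
    qlLambda x ≤ qlLambda z := by
  rw [qlLambda_of_le_one (hxz.trans hz1), qlLambda_of_le_one hz1]
  exact ql_mono ⟨hx0, hxz.trans hz1⟩ ⟨hx0.trans hxz, hz1⟩ hxz

/-- Key comparison lemma with a strictly larger initial value `a`. -/
lemma osgood_key (T C y₀ a : ℝ) (hC : 0 < C)
    (ha0 : 0 < a) (ha2 : a ≤ 2) (hy₀a : y₀ < a)
    (y : ℝ → ℝ) (hcont : ContinuousOn y (Set.Icc 0 T))
    (hrange : ∀ t ∈ Set.Icc (0 : ℝ) T, y t ∈ Set.Icc (0 : ℝ) 1)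
    (hineq : ∀ t ∈ Set.Icc (0 : ℝ) T,
      y t ≤ y₀ + C * ∫ τ in (0 : ℝ)..t, qlLambda (y τ)) :
    ∀ t ∈ Set.Icc (0 : ℝ) T,
      y t < Real.exp (1 + Real.exp (-(C * t)) * (Real.log a - 1)) := by
  set L := Real.log a with hL
  have hL1 : L < 1 := by
    have h2l : L ≤ Real.log 2 := Real.log_le_log ha0 ha2
    have h2 : Real.log 2 < 1 := by
      rw [show (1:ℝ) = Real.log (Real.exp 1) by rw [Real.log_exp]]
      exact Real.log_lt_log (by norm_num) (by
        have := Real.exp_one_gt_d9; linarith)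
    linarith
  set u : ℝ → ℝ := fun t => 1 + Real.exp (-(C * t)) * (L - 1) with hu
  set z : ℝ → ℝ := fun t => Real.exp (u t) with hz
  have hz0 : z 0 = a := by
    simp [hz, hu, hL, Real.exp_log ha0]
  have hzpos : ∀ t, 0 < z t := fun t => Real.exp_pos _
  have humono : ∀ s t : ℝ, s ≤ t → u s ≤ u t := by
    intro s t hst
    simp only [hu]
    have h1 : Real.exp (-(C * t)) ≤ Real.exp (-(C * s)) := by
      apply Real.exp_le_exp.mpr; nlinarith
    have := mul_le_mul_of_nonpos_right h1 (by linarith : L - 1 ≤ 0)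
    linarith
  have hzmono : ∀ s t : ℝ, s ≤ t → z s ≤ z t := fun s t hst =>
    Real.exp_le_exp.mpr (humono s t hst)
  have hzcont : Continuous z := by
    apply Real.continuous_exp.comp; continuity
  have hderiv : ∀ t, HasDerivAt z (C * (z t * (1 - u t))) t := by
    intro t
    have h1 : HasDerivAt (fun t : ℝ => -(C * t)) (-C) t := by
      have h0 : HasDerivAt (fun t : ℝ => -(C * t)) (-(C * 1)) t :=
        ((hasDerivAt_id t).const_mul C).neg
      simpa using h0
    have h3 : HasDerivAt u (Real.exp (-(C * t)) * (-C) * (L - 1)) t := by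
      simpa [hu] using (h1.exp.mul_const (L - 1)).const_add 1
    convert h3.exp using 1
    simp only [hz, hu]
    ring
  by_contra hcon
  push_neg at hcon
  obtain ⟨t₀, ht₀, hzy⟩ := hcon
  set A : Set ℝ := {t | t ∈ Set.Icc 0 T ∧ z t ≤ y t} with hA
  have hAne : A.Nonempty := ⟨t₀, ht₀, hzy⟩
  have hAclosed : IsClosed A := by
    have hAeq : A = Set.Icc 0 T ∩ (fun t => y t - z t) ⁻¹' Set.Ici 0 := by
      ext t
      simp only [hA, Set.mem_setOf_eq, Set.mem_inter_iff, Set.mem_preimage,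
        Set.mem_Ici, sub_nonneg]
    rw [hAeq]
    exact ContinuousOn.preimage_isClosed_of_isClosed
      (hcont.sub hzcont.continuousOn) isClosed_Icc isClosed_Ici
  have hAbdd : BddBelow A := ⟨0, fun t ht => ht.1.1⟩
  set t₁ := sInf A with ht₁
  have ht₁A : t₁ ∈ A := hAclosed.csInf_mem hAne hAbdd
  have ht₁I : t₁ ∈ Set.Icc (0:ℝ) T := ht₁A.1
  have hy0 : y 0 ≤ y₀ := by
    have h := hineq 0 ⟨le_refl 0, ht₁I.1.trans ht₁I.2⟩
    simpa using h
  have ht₁pos : 0 < t₁ := by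
    rcases lt_or_eq_of_le ht₁I.1 with h | h
    · exact h
    · exfalso
      have := ht₁A.2
      rw [← h] at this
      rw [hz0] at this
      linarith [hrange 0 ⟨le_refl 0, ht₁I.1.trans ht₁I.2⟩]
  -- strict inequality before t₁
  have hlt : ∀ s ∈ Set.Ico (0:ℝ) t₁, y s < z s := by
    intro s hs
    by_contra hle
    push_neg at hle
    have : s ∈ A := ⟨⟨hs.1, hs.2.le.trans ht₁I.2⟩, hle⟩
    exact absurd this (notMem_of_lt_csInf hs.2 hAbdd)
  -- y t₁ ≤ z t₁ by continuity from the left, hence equality with ht₁A.2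
  have hyz1 : y t₁ ≤ z t₁ := by
    have hne : (nhdsWithin t₁ (Set.Ico 0 t₁)).NeBot := by
      rw [← mem_closure_iff_nhdsWithin_neBot, closure_Ico (ne_of_lt ht₁pos)]
      exact ⟨ht₁I.1, le_refl _⟩
    have hsub : Set.Ico (0:ℝ) t₁ ⊆ Set.Icc 0 T :=
      fun s hs => ⟨hs.1, hs.2.le.trans ht₁I.2⟩
    have htend : Filter.Tendsto (fun s => y s - z s) (nhdsWithin t₁ (Set.Ico 0 t₁))
        (nhds (y t₁ - z t₁)) := by
      have h1 : ContinuousWithinAt (fun s => y s - z s) (Set.Icc 0 T) t₁ :=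
        (hcont.sub hzcont.continuousOn) t₁ ht₁I
      exact (h1.mono hsub).tendsto
    have : y t₁ - z t₁ ≤ 0 := by
      refine le_of_tendsto htend ?_
      filter_upwards [self_mem_nhdsWithin] with s hs
      linarith [hlt s hs]
    linarith
  have hle : ∀ s ∈ Set.Icc (0:ℝ) t₁, y s ≤ z s := by
    intro s hs
    rcases lt_or_eq_of_le hs.2 with h | h
    · exact (hlt s ⟨hs.1, h⟩).le
    · rw [h]; exact hyz1
  have hz1le : z t₁ ≤ 1 := by
    have := hrange t₁ ht₁I
    linarith [ht₁A.2, this.2]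
  have hzle1 : ∀ s ∈ Set.Icc (0:ℝ) t₁, z s ≤ 1 :=
    fun s hs => (hzmono s t₁ hs.2).trans hz1le
  -- continuous version of qlLambda composition
  have hqlcont : ∀ (f : ℝ → ℝ) (S : Set ℝ), ContinuousOn f S → (∀ s ∈ S, f s ≤ 1) →
      ContinuousOn (fun τ => qlLambda (f τ)) S := by
    intro f S hf hf1
    have : ContinuousOn (fun τ => f τ - f τ * Real.log (f τ)) S :=
      ((continuous_id.sub Real.continuous_mul_log).comp_continuousOn hf)
    apply this.congr
    intro s hs
    show qlLambda (f s) = f s - f s * Real.log (f s)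
    rw [qlLambda_of_le_one (hf1 s hs)]
    ring
  have huIcc : Set.uIcc (0:ℝ) t₁ = Set.Icc 0 t₁ := Set.uIcc_of_le ht₁pos.le
  have hsub1 : Set.Icc (0:ℝ) t₁ ⊆ Set.Icc 0 T :=
    Set.Icc_subset_Icc (le_refl 0) ht₁I.2
  have hinty : IntervalIntegrable (fun τ => qlLambda (y τ)) MeasureTheory.volume 0 t₁ := by
    apply ContinuousOn.intervalIntegrable
    rw [huIcc]
    exact hqlcont y (Set.Icc 0 t₁) (hcont.mono hsub1)
      (fun s hs => (hrange s (hsub1 hs)).2)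
  have hintz : IntervalIntegrable (fun τ => qlLambda (z τ)) MeasureTheory.volume 0 t₁ := by
    apply ContinuousOn.intervalIntegrable
    rw [huIcc]
    exact hqlcont z (Set.Icc 0 t₁) hzcont.continuousOn hzle1
  -- the fundamental theorem of calculus for z
  have hftc : ∫ τ in (0:ℝ)..t₁, C * qlLambda (z τ) = z t₁ - z 0 := by
    apply intervalIntegral.integral_eq_sub_of_hasDerivAt
    · intro x hx
      rw [huIcc] at hx
      have h1 := hderiv x
      have h2 : qlLambda (z x) = z x * (1 - u x) := by
        rw [qlLambda_of_le_one (hzle1 x hx)]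
        simp [hz, Real.log_exp]
      rw [h2]
      exact h1
    · exact (hintz.const_mul C)
  have hint_mono : ∫ τ in (0:ℝ)..t₁, qlLambda (y τ) ≤ ∫ τ in (0:ℝ)..t₁, qlLambda (z τ) := by
    apply intervalIntegral.integral_mono_on ht₁pos.le hinty hintz
    intro x hx
    exact qlLambda_mono (hrange x (hsub1 hx)).1 (hle x hx) (hzle1 x hx)
  have hfin := hineq t₁ ht₁I
  rw [intervalIntegral.integral_const_mul] at hftc
  have : y t₁ ≤ y₀ + (z t₁ - z 0) := by
    calc y t₁ ≤ y₀ + C * ∫ τ in (0:ℝ)..t₁, qlLambda (y τ) := hfin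
    _ ≤ y₀ + C * ∫ τ in (0:ℝ)..t₁, qlLambda (z τ) := by
        have := mul_le_mul_of_nonneg_left hint_mono hC.le
        linarith
    _ = y₀ + (z t₁ - z 0) := by rw [hftc]
  rw [hz0] at this
  linarith [ht₁A.2]

/-- Osgood-type growth bound: if a continuous `y : [0,T] → [0,1]` satisfies
`y(t) ≤ y₀ + C ∫₀ᵗ λ(y(τ)) dτ`, then `y(t) ≤ y₀^{exp(-Ct)} e^{1 - exp(-Ct)}`
(real power, so `0^s = 0` for `s > 0`). -/
theorem osgood_growth (T C y₀ : ℝ) (hT : 0 < T) (hC : 0 < C)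
    (hy₀ : y₀ ∈ Set.Icc (0 : ℝ) 1)
    (y : ℝ → ℝ) (hcont : ContinuousOn y (Set.Icc 0 T))
    (hrange : ∀ t ∈ Set.Icc (0 : ℝ) T, y t ∈ Set.Icc (0 : ℝ) 1)
    (hineq : ∀ t ∈ Set.Icc (0 : ℝ) T,
      y t ≤ y₀ + C * ∫ τ in (0 : ℝ)..t, qlLambda (y τ)) :
    ∀ t ∈ Set.Icc (0 : ℝ) T,
      y t ≤ y₀ ^ Real.exp (-(C * t)) * Real.exp (1 - Real.exp (-(C * t))) := by
  intro t ht
  set p := Real.exp (-(C * t)) with hp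
  have hppos : 0 < p := Real.exp_pos _
  have htend : Filter.Tendsto (fun ε : ℝ => (y₀ + ε) ^ p * Real.exp (1 - p))
      (nhdsWithin 0 (Set.Ioi 0)) (nhds (y₀ ^ p * Real.exp (1 - p))) := by
    have h1 : Filter.Tendsto (fun ε : ℝ => y₀ + ε) (nhdsWithin 0 (Set.Ioi 0)) (nhds y₀) := by
      have hc : Continuous (fun ε : ℝ => y₀ + ε) := by continuity
      have := hc.tendsto (0:ℝ)
      simpa using this.mono_left nhdsWithin_le_nhds
    have h2 : ContinuousAt (fun x : ℝ => x ^ p) y₀ :=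
      Real.continuousAt_rpow_const y₀ p (Or.inr hppos.le)
    exact ((h2.tendsto.comp h1).mul_const _)
  refine ge_of_tendsto htend ?_
  have hIoo : Set.Ioo (0:ℝ) 1 ∈ nhdsWithin (0:ℝ) (Set.Ioi 0) :=
    Ioo_mem_nhdsGT_of_mem ⟨le_refl 0, one_pos⟩
  filter_upwards [hIoo] with ε hε
  have ha0 : 0 < y₀ + ε := by linarith [hy₀.1, hε.1]
  have ha2 : y₀ + ε ≤ 2 := by linarith [hy₀.2, hε.2]
  have hkey := osgood_key T C y₀ (y₀ + ε) hC ha0 ha2 (by linarith [hε.1]) y hcont hrange hineq t ht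
  have : (y₀ + ε) ^ p * Real.exp (1 - p) =
      Real.exp (1 + p * (Real.log (y₀ + ε) - 1)) := by
    rw [Real.rpow_def_of_pos ha0, ← Real.exp_add]
    ring_nf
  rw [this]
  exact hkey.le
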